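/- Let $\mathfrak{g} = \mathfrak{h}\oplus\mathfrak{m}$ be a reductive decomposition with $B(\mathfrak{h},\mathfrak{m})=0$ satisfying the GO-property, let $A:\mathfrak{m}\to\mathfrak{m}$ represent $B$ via $(\cdot,\cdot)$, and let $A_\alpha, A_\beta$ be eigenspaces with nonzero distinct eigenvalues $\alpha \neq \beta$. Then for every $X \in A_\alpha$ and $Y \in A_\beta$ there exists $Z \in \mathfrak{h}$ with $(\beta-\alpha)[X,Y] = \beta[Z,X] + \alpha[Z,Y]$; in particular $[A_\alpha, A_\beta] \subseteq A_\alpha \oplus A_\beta$. -/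
import Mathlib


/-- GO setting with `𝔪 = {X : B(X,𝔥)=0}` and `A` the `(·,·)`-symmetric operator on
`𝔪` representing the Killing form `B`. If `X ∈ A_α`, `Y ∈ A_β` with `0 ≠ α ≠ β ≠ 0`, then there
is `Z ∈ 𝔥` with `(β-α)[X,Y] = β[Z,X] + α[Z,Y]`; in particular `[A_α,A_β] ⊆ A_α ⊕ A_β`. -/
theorem go_space_bracket_of_eigenspaces
    (L : Type*) [LieRing L] [LieAlgebra ℝ L] [FiniteDimensional ℝ L]
    (h : LieSubalgebra ℝ L) (m : Submodule ℝ L)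
    (hcompl : IsCompl h.toSubmodule m)
    (hmchar : ∀ x : L, x ∈ m ↔ ∀ W ∈ h, killingForm ℝ L x W = 0)
    (hadm : ∀ Z ∈ h, ∀ x ∈ m, ⁅Z, x⁆ ∈ m)
    (Φ : LinearMap.BilinForm ℝ L)
    (hΦsymm : ∀ x y : L, Φ x y = Φ y x)
    (hΦpos : ∀ x ∈ m, x ≠ 0 → 0 < Φ x x)
    (hΦinv : ∀ Z ∈ h, ∀ x ∈ m, ∀ y ∈ m, Φ ⁅Z, x⁆ y + Φ x ⁅Z, y⁆ = 0)
    (πm : L →ₗ[ℝ] L)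
    (hπmem : ∀ x : L, πm x ∈ m) (hπid : ∀ x ∈ m, πm x = x) (hπh : ∀ x ∈ h, πm x = 0)
    (hGO : ∀ X ∈ m, ∃ Z ∈ h, ∀ W ∈ m, Φ (πm ⁅X + Z, W⁆) X = 0)
    (A : L →ₗ[ℝ] L)
    (hAm : ∀ x ∈ m, A x ∈ m)
    (hAB : ∀ x ∈ m, ∀ y ∈ m, killingForm ℝ L x y = Φ (A x) y)
    (α β : ℝ) (hα : α ≠ 0) (hβ : β ≠ 0) (hαβ : α ≠ β)
    (X : L) (hX : X ∈ m) (hXe : A X = α • X)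
    (Y : L) (hY : Y ∈ m) (hYe : A Y = β • Y) :
    (∃ Z ∈ h, (β - α) • ⁅X, Y⁆ = β • ⁅Z, X⁆ + α • ⁅Z, Y⁆) ∧
      ∃ u v : L, u ∈ m ∧ A u = α • u ∧ v ∈ m ∧ A v = β • v ∧ ⁅X, Y⁆ = u + v := by
  classical
  have hαβ' : α - β ≠ 0 := sub_ne_zero.mpr hαβ
  have hβα' : β - α ≠ 0 := sub_ne_zero.mpr (Ne.symm hαβ)
  -- Killing form basics
  have hBsymm : ∀ x y : L, killingForm ℝ L x y = killingForm ℝ L y x :=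
    fun x y => LieModule.traceForm_comm ℝ L L x y
  have hBinv : ∀ z x y : L, killingForm ℝ L ⁅z, x⁆ y = - killingForm ℝ L x ⁅z, y⁆ :=
    fun z x y => LieModule.traceForm_apply_lie_apply' ℝ L L z x y
  have hBinv' : ∀ z x y : L, killingForm ℝ L ⁅z, x⁆ y = killingForm ℝ L z ⁅x, y⁆ :=
    fun z x y => LieModule.traceForm_apply_lie_apply ℝ L L z x y
  -- A is Φ-symmetric on m
  have hAsymm : ∀ x ∈ m, ∀ y ∈ m, Φ (A x) y = Φ x (A y) := by
    intro x hx y hy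
    rw [← hAB x hx y hy, hBsymm, hAB y hy x hx, hΦsymm]
  -- An element of m orthogonal to m is zero
  have hzero : ∀ d ∈ m, (∀ w ∈ m, Φ d w = 0) → d = 0 := by
    intro d hd hdw
    by_contra hne
    exact (hΦpos d hd hne).ne' (hdw d hd)
  -- A commutes with ad(Z) for Z ∈ h
  have hequiv : ∀ Z ∈ h, ∀ x ∈ m, A ⁅Z, x⁆ = ⁅Z, A x⁆ := by
    intro Z hZ x hx
    have h1 : A ⁅Z, x⁆ - ⁅Z, A x⁆ ∈ m :=
      m.sub_mem (hAm _ (hadm Z hZ x hx)) (hadm Z hZ _ (hAm x hx))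
    have h2 : ∀ w ∈ m, Φ (A ⁅Z, x⁆ - ⁅Z, A x⁆) w = 0 := by
      intro w hw
      have e1 : Φ (A ⁅Z, x⁆) w = killingForm ℝ L ⁅Z, x⁆ w :=
        (hAB _ (hadm Z hZ x hx) w hw).symm
      have e2 : killingForm ℝ L ⁅Z, x⁆ w = - killingForm ℝ L x ⁅Z, w⁆ := hBinv Z x w
      have e3 : killingForm ℝ L x ⁅Z, w⁆ = Φ (A x) ⁅Z, w⁆ := hAB x hx _ (hadm Z hZ w hw)
      have e4 : Φ ⁅Z, A x⁆ w + Φ (A x) ⁅Z, w⁆ = 0 := hΦinv Z hZ (A x) (hAm x hx) w hw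
      simp only [map_sub, LinearMap.sub_apply]
      linarith
    exact sub_eq_zero.mp (hzero _ h1 h2)
  -- decomposition: ξ - πm ξ ∈ h
  have hπdiff : ∀ ξ : L, ξ - πm ξ ∈ h := by
    intro ξ
    have hξ : ξ ∈ h.toSubmodule ⊔ m := by rw [hcompl.sup_eq_top]; trivial
    obtain ⟨a, ha, b, hb, rfl⟩ := Submodule.mem_sup.mp hξ
    have : πm (a + b) = b := by
      rw [map_add, hπh a ha, hπid b hb, zero_add]
    rw [this]
    simpa using ha
  -- B(ξ, w) only sees the m-part for w ∈ m
  have hπB : ∀ ξ : L, ∀ w ∈ m, killingForm ℝ L ξ w = killingForm ℝ L (πm ξ) w := by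
    intro ξ w hw
    have h1 : killingForm ℝ L (ξ - πm ξ) w = 0 := by
      rw [hBsymm]; exact (hmchar w).mp hw _ (hπdiff ξ)
    simp only [map_sub, LinearMap.sub_apply] at h1
    linarith
  -- key: Φ(πm ξ, A w) = B(ξ, w)
  have hπΦ : ∀ ξ : L, ∀ w ∈ m, Φ (πm ξ) (A w) = killingForm ℝ L ξ w := by
    intro ξ w hw
    rw [← hAsymm _ (hπmem ξ) w hw, ← hAB _ (hπmem ξ) w hw, ← hπB ξ w hw]
  -- eigenvectors with distinct eigenvalues are Φ-orthogonal
  have horth : ∀ p ∈ m, ∀ q ∈ m, ∀ γ δ : ℝ, A p = γ • p → A q = δ • q → γ ≠ δ →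
      Φ p q = 0 := by
    intro p hp q hq γ δ hpγ hqδ hne
    have h1 : Φ (A p) q = Φ p (A q) := hAsymm p hp q hq
    rw [hpγ, hqδ] at h1
    simp only [map_smul, LinearMap.smul_apply, smul_eq_mul] at h1
    have h2 : (γ - δ) * Φ p q = 0 := by linear_combination h1
    exact (mul_eq_zero.mp h2).resolve_left (sub_ne_zero.mpr hne)
  -- the bracket lies in m
  have hXYm : ⁅X, Y⁆ ∈ m := by
    rw [hmchar]
    intro W hW
    have t1 : killingForm ℝ L ⁅X, Y⁆ W = β * Φ ⁅W, X⁆ Y := by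
      have e1 := hBinv X Y W
      have s : killingForm ℝ L Y ⁅X, W⁆ = - killingForm ℝ L Y ⁅W, X⁆ := by
        rw [show (⁅X, W⁆ : L) = -⁅W, X⁆ from (lie_skew X W).symm, map_neg]
      have e3 : killingForm ℝ L Y ⁅W, X⁆ = β * Φ Y ⁅W, X⁆ := by
        rw [hAB Y hY _ (hadm W hW X hX), hYe]
        simp [LinearMap.smul_apply, smul_eq_mul]
      have e6 : Φ Y ⁅W, X⁆ = Φ ⁅W, X⁆ Y := hΦsymm _ _
      linear_combination e1 - s + e3 + β * e6
    have t2 : killingForm ℝ L ⁅X, Y⁆ W = α * Φ ⁅W, X⁆ Y := by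
      have s1 : killingForm ℝ L ⁅X, Y⁆ W = - killingForm ℝ L ⁅Y, X⁆ W := by
        rw [show (⁅X, Y⁆ : L) = -⁅Y, X⁆ from (lie_skew X Y).symm, map_neg,
          LinearMap.neg_apply]
      have e2 := hBinv Y X W
      have s2 : killingForm ℝ L X ⁅Y, W⁆ = - killingForm ℝ L X ⁅W, Y⁆ := by
        rw [show (⁅Y, W⁆ : L) = -⁅W, Y⁆ from (lie_skew Y W).symm, map_neg]
      have e4 : killingForm ℝ L X ⁅W, Y⁆ = α * Φ X ⁅W, Y⁆ := by
        rw [hAB X hX _ (hadm W hW Y hY), hXe]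
        simp [LinearMap.smul_apply, smul_eq_mul]
      have e5 := hΦinv W hW X hX Y hY
      linear_combination s1 - e2 + s2 - e4 - α * e5
    have h0 : Φ ⁅W, X⁆ Y = 0 := by
      have h2 : (β - α) * Φ ⁅W, X⁆ Y = 0 := by linear_combination t2 - t1
      exact (mul_eq_zero.mp h2).resolve_left hβα'
    rw [t1, h0, mul_zero]
  -- GO condition at X + Y
  obtain ⟨Z, hZ, hZgo⟩ := hGO (X + Y) (m.add_mem hX hY)
  have hZXm : (⁅Z, X⁆ : L) ∈ m := hadm Z hZ X hX
  have hZYm : (⁅Z, Y⁆ : L) ∈ m := hadm Z hZ Y hY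
  have hZXe : A ⁅Z, X⁆ = α • ⁅Z, X⁆ := by rw [hequiv Z hZ X hX, hXe, lie_smul]
  have hZYe : A ⁅Z, Y⁆ = β • ⁅Z, Y⁆ := by rw [hequiv Z hZ Y hY, hYe, lie_smul]
  set η : L := (α - β) • ⁅X, Y⁆ + β • ⁅Z, X⁆ + α • ⁅Z, Y⁆ with hηdef
  have hηm : η ∈ m := m.add_mem (m.add_mem (m.smul_mem _ hXYm) (m.smul_mem _ hZXm))
    (m.smul_mem _ hZYm)
  -- B(η, W) = 0 for all W ∈ m
  have hηB : ∀ W ∈ m, killingForm ℝ L η W = 0 := by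
    intro W hW
    have hgo := hZgo W hW
    have e1 : α * Φ (πm ⁅X + Y + Z, W⁆) X = killingForm ℝ L ⁅X + Y + Z, W⁆ X := by
      have := hπΦ ⁅X + Y + Z, W⁆ X hX
      rw [hXe] at this
      simpa only [map_smul, smul_eq_mul] using this
    have e2 : β * Φ (πm ⁅X + Y + Z, W⁆) Y = killingForm ℝ L ⁅X + Y + Z, W⁆ Y := by
      have := hπΦ ⁅X + Y + Z, W⁆ Y hY
      rw [hYe] at this
      simpa only [map_smul, smul_eq_mul] using this
    have e3 : Φ (πm ⁅X + Y + Z, W⁆) X + Φ (πm ⁅X + Y + Z, W⁆) Y = 0 := by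
      rw [← map_add]; exact hgo
    have f1 : killingForm ℝ L ⁅X + Y + Z, W⁆ X
        = killingForm ℝ L W ⁅X, Y⁆ - killingForm ℝ L W ⁅Z, X⁆ := by
      rw [hBinv _ W X]
      have g1 : (⁅X + Y + Z, X⁆ : L) = -⁅X, Y⁆ + ⁅Z, X⁆ := by
        rw [add_lie, add_lie, lie_self, zero_add,
          show (⁅Y, X⁆ : L) = -⁅X, Y⁆ from (lie_skew Y X).symm]
      rw [g1, map_add, map_neg]
      ring
    have f2 : killingForm ℝ L ⁅X + Y + Z, W⁆ Y
        = - killingForm ℝ L W ⁅X, Y⁆ - killingForm ℝ L W ⁅Z, Y⁆ := by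
      rw [hBinv _ W Y]
      have g2 : (⁅X + Y + Z, Y⁆ : L) = ⁅X, Y⁆ + ⁅Z, Y⁆ := by
        rw [add_lie, add_lie, lie_self, add_zero]
      rw [g2, map_add]
      ring
    rw [hBsymm, hηdef]
    simp only [map_add, map_smul, smul_eq_mul]
    linear_combination β * e1 + α * e2 + β * f1 + α * f2 - α * β * e3
  -- hence A η = 0
  have hAη : A η = 0 := by
    apply hzero _ (hAm η hηm)
    intro w hw
    rw [← hAB η hηm w hw]
    exact hηB w hw
  -- the kernel component n
  set n : L := (α - β)⁻¹ • η with hndef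
  have hnm : n ∈ m := m.smul_mem _ hηm
  have hAn : A n = 0 := by rw [hndef, map_smul, hAη, smul_zero]
  have hAn' : A n = (0 : ℝ) • n := by rw [hAn, zero_smul]
  have hηn : η = (α - β) • n := by
    rw [hndef, smul_smul, mul_inv_cancel₀ hαβ', one_smul]
  -- Φ(⁅X,Y⁆, n) = Φ(n, n)
  have hΦXYn : Φ ⁅X, Y⁆ n = Φ n n := by
    have e1 : Φ η n = (α - β) * Φ ⁅X, Y⁆ n + β * Φ ⁅Z, X⁆ n + α * Φ ⁅Z, Y⁆ n := by
      rw [hηdef]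
      simp only [map_add, map_smul, LinearMap.add_apply, LinearMap.smul_apply, smul_eq_mul]
    have e2 : Φ η n = (α - β) * Φ n n := by
      rw [hηn]
      simp only [map_smul, LinearMap.smul_apply, smul_eq_mul]
    have o1 : Φ ⁅Z, X⁆ n = 0 := horth _ hZXm _ hnm α 0 hZXe hAn' hα
    have o2 : Φ ⁅Z, Y⁆ n = 0 := horth _ hZYm _ hnm β 0 hZYe hAn' hβ
    have h2 : (α - β) * Φ ⁅X, Y⁆ n = (α - β) * Φ n n := by
      rw [o1, o2] at e1
      linarith
    exact mul_left_cancel₀ hαβ' h2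
  -- GO at n kills Φ(πm ⁅n, Y⁆, n)
  have hstep1 : Φ (πm ⁅n, Y⁆) n = 0 := by
    obtain ⟨Z₄, hZ₄, hgo₄⟩ := hGO n hnm
    have hgo := hgo₄ Y hY
    simp only [add_lie, map_add, LinearMap.add_apply] at hgo
    have hZ₄Ye : A ⁅Z₄, Y⁆ = β • ⁅Z₄, Y⁆ := by rw [hequiv Z₄ hZ₄ Y hY, hYe, lie_smul]
    have h0 : Φ (πm ⁅Z₄, Y⁆) n = 0 := by
      rw [hπid _ (hadm Z₄ hZ₄ Y hY)]
      exact horth _ (hadm Z₄ hZ₄ Y hY) _ hnm β 0 hZ₄Ye hAn' hβ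
    rw [h0, add_zero] at hgo
    exact hgo
  -- GO at X + n gives Φ(n,n) = 0
  have hnn : Φ n n = 0 := by
    obtain ⟨Z₃, hZ₃, hgo₃⟩ := hGO (X + n) (m.add_mem hX hnm)
    have hgo := hgo₃ Y hY
    simp only [add_lie, map_add, LinearMap.add_apply] at hgo
    have hZ₃Ym : (⁅Z₃, Y⁆ : L) ∈ m := hadm Z₃ hZ₃ Y hY
    have hZ₃Ye : A ⁅Z₃, Y⁆ = β • ⁅Z₃, Y⁆ := by rw [hequiv Z₃ hZ₃ Y hY, hYe, lie_smul]
    have t1 : Φ (πm ⁅X, Y⁆) X = 0 := by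
      have e1 : Φ (πm ⁅X, Y⁆) (A X) = killingForm ℝ L ⁅X, Y⁆ X := hπΦ ⁅X, Y⁆ X hX
      rw [hXe] at e1
      simp only [map_smul, smul_eq_mul] at e1
      have e2 : killingForm ℝ L ⁅X, Y⁆ X = 0 := by
        rw [hBinv X Y X]
        simp
      rw [e2] at e1
      exact (mul_eq_zero.mp e1).resolve_left hα
    have t2 : Φ (πm ⁅X, Y⁆) n = Φ n n := by rw [hπid _ hXYm]; exact hΦXYn
    have t3 : Φ (πm ⁅n, Y⁆) X = 0 := by
      have e1 : Φ (πm ⁅n, Y⁆) (A X) = killingForm ℝ L ⁅n, Y⁆ X := hπΦ ⁅n, Y⁆ X hX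
      rw [hXe] at e1
      simp only [map_smul, smul_eq_mul] at e1
      have e2 : killingForm ℝ L ⁅n, Y⁆ X = 0 := by
        rw [hBinv' n Y X]
        have hYXm : (⁅Y, X⁆ : L) ∈ m := by
          rw [show (⁅Y, X⁆ : L) = -⁅X, Y⁆ from (lie_skew Y X).symm]
          exact m.neg_mem hXYm
        rw [hAB n hnm _ hYXm, hAn]
        simp
      rw [e2] at e1
      exact (mul_eq_zero.mp e1).resolve_left hα
    have t5 : Φ (πm ⁅Z₃, Y⁆) X = 0 := by
      rw [hπid _ hZ₃Ym]
      exact horth _ hZ₃Ym _ hX β α hZ₃Ye hXe (Ne.symm hαβ)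
    have t6 : Φ (πm ⁅Z₃, Y⁆) n = 0 := by
      rw [hπid _ hZ₃Ym]
      exact horth _ hZ₃Ym _ hnm β 0 hZ₃Ye hAn' hβ
    rw [t1, t2, t3, hstep1, t5, t6] at hgo
    linarith
  have hn0 : n = 0 := by
    by_contra hne
    exact (hΦpos n hnm hne).ne' hnn
  have hη0 : η = 0 := by rw [hηn, hn0, smul_zero]
  have hmain : (β - α) • ⁅X, Y⁆ = β • ⁅Z, X⁆ + α • ⁅Z, Y⁆ := by
    have h2 : (β - α) • ⁅X, Y⁆ - (β • ⁅Z, X⁆ + α • ⁅Z, Y⁆) = -η := by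
      rw [hηdef]; module
    rw [hη0, neg_zero, sub_eq_zero] at h2
    exact h2
  refine ⟨⟨Z, hZ, hmain⟩, ((β - α)⁻¹ * β) • ⁅Z, X⁆, ((β - α)⁻¹ * α) • ⁅Z, Y⁆,
    m.smul_mem _ hZXm, ?_, m.smul_mem _ hZYm, ?_, ?_⟩
  · rw [map_smul, hZXe, smul_smul, smul_smul, mul_comm]
  · rw [map_smul, hZYe, smul_smul, smul_smul, mul_comm]
  · have hr : ⁅X, Y⁆ = (β - α)⁻¹ • ((β - α) • ⁅X, Y⁆) := by
      rw [smul_smul, inv_mul_cancel₀ hβα', one_smul]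
    rw [hr, hmain, smul_add, smul_smul, smul_smul]
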